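/- If S ~ N(μ, 1) with μ ≠ 0, then the two-sided p-value p(S) = 2(1 - Φ(|S|)) is stochastically smaller than the uniform distribution: for all t ∈ (0,1), P(p(S) < t) > t. -/
import Mathlib


open MeasureTheory

/-- Standard normal density. -/
noncomputable def stdNormalPDF (x : ℝ) : ℝ :=
  (Real.sqrt (2 * Real.pi))⁻¹ * Real.exp (-x ^ 2 / 2)

/-- Standard normal CDF. -/
noncomputable def Phi (x : ℝ) : ℝ := ∫ t in Set.Iic x, stdNormalPDF t

open Set Filter Real

lemma phi_pos (x : ℝ) : 0 < stdNormalPDF x := by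
  unfold stdNormalPDF
  positivity

lemma phi_cont : Continuous stdNormalPDF := by
  unfold stdNormalPDF
  fun_prop

lemma phi_even (x : ℝ) : stdNormalPDF (-x) = stdNormalPDF x := by
  simp [stdNormalPDF]

lemma phi_integrable : Integrable stdNormalPDF := by
  have h : stdNormalPDF = fun x => (Real.sqrt (2 * Real.pi))⁻¹ * Real.exp (-(1/2 : ℝ) * x ^ 2) := by
    funext x; unfold stdNormalPDF; ring_nf
  rw [h]
  exact (integrable_exp_neg_mul_sq (by norm_num)).const_mul _

lemma phi_total : ∫ x, stdNormalPDF x = 1 := by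
  have h : ∫ x, stdNormalPDF x
      = (Real.sqrt (2 * Real.pi))⁻¹ * ∫ x : ℝ, Real.exp (-(1/2 : ℝ) * x ^ 2) := by
    rw [← integral_const_mul]
    congr 1; funext x; unfold stdNormalPDF; ring_nf
  rw [h, integral_gaussian]
  have : ((π : ℝ) / (1/2)) = 2 * π := by ring
  rw [this]
  rw [inv_mul_cancel₀]
  positivity

lemma Phi_sub (a b : ℝ) : Phi b - Phi a = ∫ x in a..b, stdNormalPDF x :=
  intervalIntegral.integral_Iic_sub_Iic phi_integrable.integrableOn phi_integrable.integrableOn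

lemma Phi_strictMono : StrictMono Phi := by
  intro a b hab
  have h : 0 < ∫ x in a..b, stdNormalPDF x :=
    intervalIntegral.intervalIntegral_pos_of_pos phi_integrable.intervalIntegrable
      (fun x => phi_pos x) hab
  have := Phi_sub a b
  linarith

lemma Phi_neg (x : ℝ) : Phi (-x) = 1 - Phi x := by
  have h1 : Phi (-x) = ∫ t in Set.Ioi x, stdNormalPDF t := by
    unfold Phi
    rw [← neg_neg x, ← integral_comp_neg_Iic (-x) stdNormalPDF]
    simp_rw [phi_even, neg_neg]
  have h2 : Phi x + ∫ t in Set.Ioi x, stdNormalPDF t = 1 := by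
    unfold Phi
    rw [intervalIntegral.integral_Iic_add_Ioi phi_integrable.integrableOn phi_integrable.integrableOn, phi_total]
  linarith

lemma Phi_zero : Phi 0 = 1/2 := by
  have := Phi_neg 0
  rw [neg_zero] at this
  linarith

lemma Phi_continuous : Continuous Phi := by
  have h : Phi = fun x => Phi 0 + ∫ t in (0:ℝ)..x, stdNormalPDF t := by
    funext x
    have := Phi_sub 0 x
    linarith
  rw [h]
  exact continuous_const.add (phi_integrable.continuous_primitive 0)

lemma Phi_tendsto_atTop : Tendsto Phi atTop (nhds 1) := by
  have h : Tendsto (fun x => Phi 0 + ∫ t in (0:ℝ)..x, stdNormalPDF t) atTop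
      (nhds (Phi 0 + ∫ t in Set.Ioi (0:ℝ), stdNormalPDF t)) :=
    tendsto_const_nhds.add
      (intervalIntegral_tendsto_integral_Ioi 0 phi_integrable.integrableOn tendsto_id)
  have h2 : Phi 0 + ∫ t in Set.Ioi (0:ℝ), stdNormalPDF t = 1 := by
    unfold Phi
    rw [intervalIntegral.integral_Iic_add_Ioi phi_integrable.integrableOn phi_integrable.integrableOn, phi_total]
  rw [h2] at h
  refine h.congr fun x => ?_
  have := Phi_sub 0 x
  linarith

lemma Phi_le_one (x : ℝ) : Phi x ≤ 1 :=
  ge_of_tendsto Phi_tendsto_atTop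
    (eventually_atTop.2 ⟨x, fun _ hy => Phi_strictMono.monotone hy⟩)

lemma phi_le {x y : ℝ} (h : y ^ 2 ≤ x ^ 2) : stdNormalPDF x ≤ stdNormalPDF y := by
  unfold stdNormalPDF
  have : Real.exp (-x ^ 2 / 2) ≤ Real.exp (-y ^ 2 / 2) := Real.exp_le_exp.2 (by linarith)
  have h0 : (0:ℝ) ≤ (Real.sqrt (2 * Real.pi))⁻¹ := by positivity
  exact mul_le_mul_of_nonneg_left this h0

lemma phi_lt {x y : ℝ} (h : y ^ 2 < x ^ 2) : stdNormalPDF x < stdNormalPDF y := by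
  unfold stdNormalPDF
  have : Real.exp (-x ^ 2 / 2) < Real.exp (-y ^ 2 / 2) := Real.exp_lt_exp.2 (by linarith)
  have h0 : (0:ℝ) < (Real.sqrt (2 * Real.pi))⁻¹ := by positivity
  exact mul_lt_mul_of_pos_left this h0

lemma key_pos (c m : ℝ) (hc : 0 < c) (hm : 0 < m) :
    Phi (c - m) - Phi (-c - m) < Phi c - Phi (-c) := by
  have h1 : ∫ s in (0:ℝ)..m, stdNormalPDF (c - s) = Phi c - Phi (c - m) := by
    rw [intervalIntegral.integral_comp_sub_left stdNormalPDF c, ← Phi_sub]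
    norm_num
  have h2 : ∫ s in (0:ℝ)..m, stdNormalPDF (c + s) = Phi (-c) - Phi (-c - m) := by
    calc ∫ s in (0:ℝ)..m, stdNormalPDF (c + s)
        = ∫ x in c..(c + m), stdNormalPDF x := by
          rw [intervalIntegral.integral_comp_add_left stdNormalPDF c]; norm_num
      _ = ∫ x in c..(c + m), stdNormalPDF (-x) := by simp_rw [phi_even]
      _ = ∫ x in (-(c + m))..(-c), stdNormalPDF x := intervalIntegral.integral_comp_neg _
      _ = Phi (-c) - Phi (-(c + m)) := (Phi_sub _ _).symm
      _ = Phi (-c) - Phi (-c - m) := by ring_nf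
  have h3 : (∫ s in (0:ℝ)..m, stdNormalPDF (c + s)) < ∫ s in (0:ℝ)..m, stdNormalPDF (c - s) := by
    apply intervalIntegral.integral_lt_integral_of_continuousOn_of_le_of_exists_lt hm
    · exact (phi_cont.comp (continuous_const.add continuous_id)).continuousOn
    · exact (phi_cont.comp (continuous_const.sub continuous_id)).continuousOn
    · intro x hx
      exact phi_le (by nlinarith [hx.1.le])
    · exact ⟨m, ⟨hm.le, le_refl m⟩, phi_lt (by nlinarith)⟩
  linarith

lemma key (c m : ℝ) (hc : 0 < c) (hm : m ≠ 0) :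
    Phi (c - m) - Phi (-c - m) < Phi c - Phi (-c) := by
  rcases hm.lt_or_gt with h | h
  · have hk := key_pos c (-m) hc (by linarith)
    rw [show c - -m = c + m by ring, show -c - -m = m - c by ring] at hk
    have e1 : Phi (c - m) = 1 - Phi (m - c) := by
      rw [show c - m = -(m - c) by ring, Phi_neg]
    have e2 : Phi (-c - m) = 1 - Phi (c + m) := by
      rw [show -c - m = -(c + m) by ring, Phi_neg]
    linarith
  · exact key_pos c m hc h

/-- If `S ~ N(μ₀, 1)` with `μ₀ ≠ 0`, the two-sided p-value `2(1 - Φ(|S|))` is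
stochastically smaller than uniform: `P(p(S) < t) > t` for all `t ∈ (0,1)`. -/
theorem twoSided_pvalue_stochastically_smaller_of_normal_alternative
    {Ω : Type*} [MeasurableSpace Ω] (μ : Measure Ω) [IsProbabilityMeasure μ]
    (S : Ω → ℝ) (hS : Measurable S) (μ₀ : ℝ) (hμ₀ : μ₀ ≠ 0)
    (hlaw : ∀ x, (μ {ω | S ω ≤ x}).toReal = Phi (x - μ₀)) :
    ∀ t ∈ Set.Ioo (0:ℝ) 1, t < (μ {ω | 2 * (1 - Phi |S ω|) < t}).toReal := by
  -- the law of S for strict inequalities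
  have hlt' : ∀ x : ℝ, (μ {ω | S ω < x}).toReal = Phi (x - μ₀) := by
    intro x
    have hsets : {ω | S ω < x} = ⋃ n : ℕ, {ω | S ω ≤ x - 1/((n:ℝ)+1)} := by
      ext ω
      simp only [Set.mem_setOf_eq, Set.mem_iUnion]
      constructor
      · intro h
        obtain ⟨n, hn⟩ := exists_nat_one_div_lt (sub_pos.2 h)
        exact ⟨n, by linarith⟩
      · rintro ⟨n, hn⟩
        have h0 : (0:ℝ) < 1/((n:ℝ)+1) := by positivity
        linarith
    have hmono : Monotone fun n : ℕ => {ω | S ω ≤ x - 1/((n:ℝ)+1)} := by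
      intro a b hab ω h
      simp only [Set.mem_setOf_eq] at *
      have hab' : ((a:ℝ)+1) ≤ ((b:ℝ)+1) := by exact_mod_cast by omega
      have : (1:ℝ)/((b:ℝ)+1) ≤ 1/((a:ℝ)+1) :=
        one_div_le_one_div_of_le (by positivity) hab'
      linarith
    have ht : Tendsto (fun n : ℕ => μ {ω | S ω ≤ x - 1/((n:ℝ)+1)}) atTop
        (nhds (μ {ω | S ω < x})) := by
      rw [hsets]
      exact tendsto_measure_iUnion_atTop hmono
    have ht2 : Tendsto (fun n : ℕ => (μ {ω | S ω ≤ x - 1/((n:ℝ)+1)}).toReal) atTop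
        (nhds (μ {ω | S ω < x}).toReal) :=
      (ENNReal.tendsto_toReal (measure_ne_top μ _)).comp ht
    have ht3 : Tendsto (fun n : ℕ => Phi (x - 1/((n:ℝ)+1) - μ₀)) atTop
        (nhds (μ {ω | S ω < x}).toReal) := ht2.congr fun n => hlaw _
    have ht4 : Tendsto (fun n : ℕ => Phi (x - 1/((n:ℝ)+1) - μ₀)) atTop
        (nhds (Phi (x - μ₀))) := by
      have harg : Tendsto (fun n : ℕ => x - 1/((n:ℝ)+1) - μ₀) atTop (nhds (x - μ₀)) := by
        have h0 : Tendsto (fun n : ℕ => 1/((n:ℝ)+1)) atTop (nhds 0) :=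
          tendsto_one_div_add_atTop_nhds_zero_nat
        have := (tendsto_const_nhds (x := x) (f := atTop (α := ℕ))).sub h0
        simpa using this.sub (tendsto_const_nhds (x := μ₀))
      exact (Phi_continuous.tendsto _).comp harg
    exact tendsto_nhds_unique ht3 ht4
  intro t ht
  obtain ⟨ht0, ht1⟩ := ht
  -- find the critical value c with Phi c = 1 - t/2
  obtain ⟨b, hbb⟩ :=
    (Phi_tendsto_atTop.eventually (eventually_gt_nhds (show 1 - t/2 < 1 by linarith))).exists
  have hb0 : (0:ℝ) ≤ b := by
    by_contra hcon
    have : Phi b < Phi 0 := Phi_strictMono (by linarith)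
    rw [Phi_zero] at this
    linarith
  obtain ⟨c, _, hc⟩ := intermediate_value_Icc hb0 Phi_continuous.continuousOn
    (Set.mem_Icc.2 ⟨by rw [Phi_zero]; linarith, hbb.le⟩)
  have hc0 : (0:ℝ) < c := by
    have : Phi 0 < Phi c := by rw [Phi_zero, hc]; linarith
    exact Phi_strictMono.lt_iff_lt.mp this
  -- rewrite the event
  have hE : {ω | 2 * (1 - Phi |S ω|) < t} = {ω | c < S ω} ∪ {ω | S ω < -c} := by
    ext ω
    simp only [Set.mem_setOf_eq, Set.mem_union]
    constructor
    · intro h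
      have h2 : Phi c < Phi |S ω| := by rw [hc]; linarith
      have h3 := Phi_strictMono.lt_iff_lt.mp h2
      rcases lt_abs.mp h3 with h4 | h4
      · exact Or.inl h4
      · exact Or.inr (by linarith)
    · intro h
      have hcs : c < |S ω| := by
        rcases h with h4 | h4
        · exact lt_of_lt_of_le h4 (le_abs_self _)
        · exact lt_of_lt_of_le (by linarith : c < -(S ω)) (neg_le_abs _)
      have := Phi_strictMono hcs
      rw [hc] at this
      linarith
  have hm1 : MeasurableSet {ω | c < S ω} := hS measurableSet_Ioi
  have hm2 : MeasurableSet {ω | S ω < -c} := hS measurableSet_Iio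
  have hdisj : Disjoint {ω | c < S ω} {ω | S ω < -c} := by
    rw [Set.disjoint_left]
    intro ω h1 h2
    simp only [Set.mem_setOf_eq] at *
    linarith
  have hμE : (μ ({ω | c < S ω} ∪ {ω | S ω < -c})).toReal
      = (μ {ω | c < S ω}).toReal + (μ {ω | S ω < -c}).toReal := by
    rw [measure_union hdisj hm2, ENNReal.toReal_add (measure_ne_top μ _) (measure_ne_top μ _)]
  have hgt : (μ {ω | c < S ω}).toReal = 1 - Phi (c - μ₀) := by
    have hcompl : {ω | c < S ω} = {ω | S ω ≤ c}ᶜ := by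
      ext ω; simp [not_le]
    have hmc : MeasurableSet {ω | S ω ≤ c} := hS measurableSet_Iic
    rw [hcompl, measure_compl hmc (measure_ne_top μ _), measure_univ,
      ENNReal.toReal_sub_of_le prob_le_one (by simp), ENNReal.toReal_one, hlaw c]
  rw [hE, hμE, hgt, hlt' (-c)]
  have hkey : Phi (c - μ₀) - Phi (-c - μ₀) < Phi c - Phi (-c) := key c μ₀ hc0 hμ₀
  have hPn : Phi (-c) = 1 - Phi c := Phi_neg c
  linarith
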